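/- If (Q,Y) rejects (u,a), then there exists X ∈ [depth_Y(a), Y] such that (Q,Y) does not accept (u,b) for any b ∈ r_{|a|+1}([a,X]). -/

import Mathlib

noncomputable section
open scoped Classical

/-- A perfect subset of Cantor space (perfect and nonempty). -/
def PerfectSet (C : Set (ℕ → Bool)) : Prop := Perfect C ∧ C.Nonempty

/-- `l` is a node of the tree `T_Q` of the set `Q ⊆ 2^ℕ`. -/
def InTree (Q : Set (ℕ → Bool)) (l : List Bool) : Prop :=
  ∃ x ∈ Q, ∀ i : Fin l.length, l.get i = x i

/-- `l` is a splitting (ramification) node of `T_Q`. -/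
def SplitNode (Q : Set (ℕ → Bool)) (l : List Bool) : Prop :=
  InTree Q (l ++ [false]) ∧ InTree Q (l ++ [true])

/-- The first splitting node of `T_Q` extending `t` (junk value `t` if none exists). -/
noncomputable def firstSplit (Q : Set (ℕ → Bool)) (t : List Bool) : List Bool :=
  if h : ∃ l, t <+: l ∧ SplitNode Q l ∧
      ∀ l', t <+: l' → SplitNode Q l' → l.length ≤ l'.length
  then h.choose else t

/-- Auxiliary: the canonical node `u(Q)`, with `u` given in reverse. -/
noncomputable def canonNodeRev (Q : Set (ℕ → Bool)) : List Bool → List Bool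
  | [] => []
  | i :: u => firstSplit Q (canonNodeRev Q u) ++ [i]

/-- The canonical node `u(Q)` of the tree `T_Q`. -/
noncomputable def canonNode (Q : Set (ℕ → Bool)) (u : List Bool) : List Bool :=
  canonNodeRev Q u.reverse

/-- The canonical piece `Q(u) = Q ∩ [u(Q)]`. -/
noncomputable def piece (Q : Set (ℕ → Bool)) (u : List Bool) : Set (ℕ → Bool) :=
  {x ∈ Q | ∀ i : Fin (canonNode Q u).length, (canonNode Q u).get i = x i}
noncomputable section
open scoped Classical

/-- An abstract Ramsey structure `(ℛ, 𝒮, ≤, ≤⁰, r, s)` with finitizations. -/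
structure RamseyStructure where
  R : Type
  S : Type
  AR : Type
  AS : Type
  le : S → S → Prop
  le0 : R → S → Prop
  r : R → ℕ → AR
  s : S → ℕ → AS
  lenR : AR → ℕ
  lenS : AS → ℕ
  lefin : AS → AS → Prop
  le0fin : AR → AS → Prop

namespace RamseyStructure

variable (σ : RamseyStructure)

def A1 : Prop := (∀ A B, σ.r A 0 = σ.r B 0) ∧ (∀ X Y, σ.s X 0 = σ.s Y 0)

def A2 : Prop := (∀ A B, A ≠ B → ∃ n, σ.r A n ≠ σ.r B n) ∧
  (∀ X Y, X ≠ Y → ∃ n, σ.s X n ≠ σ.s Y n)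

def A3 : Prop :=
  (∀ A B n m, σ.r A n = σ.r B m → n = m ∧ ∀ k, k < n → σ.r A k = σ.r B k) ∧
  (∀ X Y n m, σ.s X n = σ.s Y m → n = m ∧ ∀ k, k < n → σ.s X k = σ.s Y k)

/-- Approximations carry their length. -/
def lenOK : Prop := (∀ A n, σ.lenR (σ.r A n) = n) ∧ (∀ X n, σ.lenS (σ.s X n) = n)

/-- `a ⊑ b` : `b` end-extends `a` (in `𝒜ℛ`). -/
def endExtR (a b : σ.AR) : Prop :=
  ∀ B n, b = σ.r B n → ∃ m, m ≤ σ.lenR b ∧ a = σ.r B m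

/-- `x ⊑ y` : `y` end-extends `x` (in `𝒜𝒮`). -/
def endExtS (x y : σ.AS) : Prop :=
  ∀ Y n, y = σ.s Y n → ∃ m, m ≤ σ.lenS y ∧ x = σ.s Y m

/-- Axiom (A.4) (finitization). -/
def A4 : Prop :=
  (∀ x : σ.AS, {a : σ.AR | σ.le0fin a x}.Finite ∧ {y : σ.AS | σ.lefin y x}.Finite) ∧
  (∀ X Y, σ.le X Y ↔ ∀ n, ∃ m, σ.lefin (σ.s X n) (σ.s Y m)) ∧
  (∀ A X, σ.le0 A X ↔ ∀ n, ∃ m, σ.le0fin (σ.r A n) (σ.s X m)) ∧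
  (∀ a x y, σ.le0fin a x → σ.lefin x y → σ.le0fin a y) ∧
  (∀ a b x, σ.endExtR a b → σ.le0fin b x → ∃ y, σ.endExtS y x ∧ σ.le0fin a y)

/-- `depth_Y(a)`, an integer (`-1` if `a` fits in no approximation of `Y`). -/
noncomputable def depth (a : σ.AR) (Y : σ.S) : ℤ :=
  if ∃ k, σ.le0fin a (σ.s Y k) then (sInf {k | σ.le0fin a (σ.s Y k)} : ℕ) else -1

/-- The basic set `[a, Y] ⊆ ℛ`. -/
def basicR (a : σ.AR) (Y : σ.S) : Set σ.R := {A | σ.le0 A Y ∧ ∃ n, σ.r A n = a}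

/-- The basic set `[x, Y] ⊆ 𝒮`. -/
def basicSx (x : σ.AS) (Y : σ.S) : Set σ.S := {X | σ.le X Y ∧ ∃ n, σ.s X n = x}

/-- The basic set `[n, Y] = [s_n(Y), Y] ⊆ 𝒮`. -/
def basicSn (n : ℕ) (Y : σ.S) : Set σ.S := σ.basicSx (σ.s Y n) Y

/-- Axiom (A.5) (amalgamation). -/
def A5 : Prop := ∀ (a : σ.AR) (Y : σ.S),
  ((0:ℤ) ≤ σ.depth a Y → ∀ X ∈ σ.basicSn (σ.depth a Y).toNat Y, (σ.basicR a X).Nonempty) ∧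
  (∀ X, σ.le X Y → (σ.basicR a X).Nonempty →
    ∃ Y' ∈ σ.basicSn (σ.depth a Y).toNat Y, σ.basicR a Y' ⊆ σ.basicR a X)

/-- Axiom (A.6) (abstract pigeonhole principle). -/
def A6 : Prop := ∀ (a : σ.AR) (O : Set σ.AR) (Y : σ.S), (σ.basicR a Y).Nonempty →
  ∃ X ∈ σ.basicSn (σ.depth a Y).toNat Y,
    (∀ A ∈ σ.basicR a X, σ.r A (σ.lenR a + 1) ∈ O) ∨
    (∀ A ∈ σ.basicR a X, σ.r A (σ.lenR a + 1) ∉ O)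

/-- All the axioms (A.1)–(A.6) together with coherence of lengths. -/
def AxiomsAll : Prop := σ.A1 ∧ σ.A2 ∧ σ.A3 ∧ σ.lenOK ∧ σ.A4 ∧ σ.A5 ∧ σ.A6

/-- `𝒮` is closed in `𝒜𝒮^ℕ` (product of discrete topologies), via `X ↦ (s_n(X))_n`. -/
def SClosed : Prop :=
  letI : TopologicalSpace σ.AS := ⊥
  IsClosed {f : ℕ → σ.AS | ∃ X : σ.S, ∀ n, σ.s X n = f n}

/-- `𝒜ℛ[X] = {b : [b,X] ≠ ∅}`. -/
def ARof (X : σ.S) : Set σ.AR := {b | (σ.basicR b X).Nonempty}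

end RamseyStructure

/-- `x|k`, the length-`k` initial segment of `x ∈ 2^ℕ`. -/
def restrict (x : ℕ → Bool) (k : ℕ) : List Bool := List.ofFn fun i : Fin k => x i

/-- Combinatorial forcing: `(Q,Y)` accepts `(u,a)` (relative to `ℱ`). -/
def accepts (σ : RamseyStructure) (F : Set (List Bool × σ.AR)) (Q : Set (ℕ → Bool))
    (Y : σ.S) (u : List Bool) (a : σ.AR) : Prop :=
  ∀ x ∈ piece Q u, ∀ B ∈ σ.basicR a Y, ∃ k m : ℕ, (restrict x k, σ.r B m) ∈ F

/-- `(Q,Y)` rejects `(u,a)`: no `(M,X)` with `M` perfect `⊆ Q(u)`, `X ≤ Y`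
compatible with `a`, accepts `(u,a)`. -/
def rejects (σ : RamseyStructure) (F : Set (List Bool × σ.AR)) (Q : Set (ℕ → Bool))
    (Y : σ.S) (u : List Bool) (a : σ.AR) : Prop :=
  ∀ M : Set (ℕ → Bool), PerfectSet M → M ⊆ piece Q u →
    ∀ X : σ.S, σ.le X Y → (σ.basicR a X).Nonempty → ¬ accepts σ F M X u a

/-- `(Q,Y)` decides `(u,a)`: it accepts or rejects it. -/
def decides (σ : RamseyStructure) (F : Set (List Bool × σ.AR)) (Q : Set (ℕ → Bool))
    (Y : σ.S) (u : List Bool) (a : σ.AR) : Prop :=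
  accepts σ F Q Y u a ∨ rejects σ F Q Y u a

section CantorAux

/-- the cylinder of a finite string -/
def cyl (l : List Bool) : Set (ℕ → Bool) := {x | ∀ i : Fin l.length, l.get i = x i}

lemma isOpen_cyl (l : List Bool) : IsOpen (cyl l) := by
  have : cyl l = ⋂ i : Fin l.length, (fun x : ℕ → Bool => x i) ⁻¹' {l.get i} := by
    ext x; simp [cyl, eq_comm, Set.mem_iInter]
  rw [this]
  exact isOpen_iInter_of_finite fun i =>
    (continuous_apply (i : ℕ)).isOpen_preimage _ (isOpen_discrete _)

lemma isClosed_cyl (l : List Bool) : IsClosed (cyl l) := by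
  have : cyl l = ⋂ i : Fin l.length, (fun x : ℕ → Bool => x i) ⁻¹' {l.get i} := by
    ext x; simp [cyl, eq_comm, Set.mem_iInter]
  rw [this]
  exact isClosed_iInter fun i =>
    (isClosed_discrete _).preimage (continuous_apply (i : ℕ))

lemma mem_cyl_restrict (x : ℕ → Bool) (k : ℕ) : x ∈ cyl (restrict x k) := by
  intro i; rw [List.get_eq_getElem]; simp [restrict, List.get_ofFn]

lemma mem_cyl_iff (y : ℕ → Bool) (x : ℕ → Bool) (k : ℕ) :
    y ∈ cyl (restrict x k) ↔ ∀ i < k, x i = y i := by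
  constructor
  · intro h i hi
    have := h ⟨i, by simpa [restrict] using hi⟩
    simpa [restrict, List.get_ofFn] using this
  · intro h i
    have hi : (i : ℕ) < k := by simpa [restrict] using i.isLt
    rw [List.get_eq_getElem]; simpa [restrict, List.get_ofFn] using h i hi

lemma restrict_succ (x : ℕ → Bool) (m : ℕ) :
    restrict x (m + 1) = restrict x m ++ [x m] := by
  rw [restrict, List.ofFn_succ', List.concat_eq_append]
  rfl

lemma inTree_restrict {Q : Set (ℕ → Bool)} {x : ℕ → Bool} (hx : x ∈ Q) (k : ℕ) :
    InTree Q (restrict x k) := by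
  exact ⟨x, hx, fun i => by rw [List.get_eq_getElem]; simp [restrict, List.get_ofFn]⟩

/-- key: a perfect set's tree splits above every node -/
lemma exists_splitNode {Q : Set (ℕ → Bool)} (hQ : Perfect Q) {t : List Bool}
    (ht : InTree Q t) : ∃ l, t <+: l ∧ SplitNode Q l := by
  obtain ⟨x, hxQ, hxt⟩ := ht
  set n := t.length with hn
  obtain ⟨y, ⟨hyU, hyQ⟩, hyx⟩ :=
    accPt_iff_nhds.mp (hQ.acc x hxQ) (cyl (restrict x n))
      ((isOpen_cyl _).mem_nhds (mem_cyl_restrict x n))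
  have hagree := (mem_cyl_iff y x n).mp hyU
  have hex : ∃ m, x m ≠ y m := by
    by_contra h
    push_neg at h
    exact hyx (funext fun i => (h i).symm)
  classical
  let m := Nat.find hex
  have hm : x m ≠ y m := Nat.find_spec hex
  have hmin : ∀ i < m, x i = y i := fun i hi => by
    have := Nat.find_min hex hi; simpa using this
  have hnm : n ≤ m := by
    by_contra h
    push_neg at h
    exact hm (hagree m h)
  refine ⟨restrict x m, ?_, ?_⟩
  · have htake : t = (restrict x m).take n := by
      apply List.ext_get
      · simp [restrict, hnm]; rfl
      · intro i hi hi'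
        have hin : i < n := by simpa using hi
        have := hxt ⟨i, hi⟩
        simp only [List.get_ofFn, restrict] at *
        simpa [List.get_eq_getElem, List.getElem_take, restrict, List.getElem_ofFn] using this
    rw [htake]; exact List.take_prefix _ _
  · have hxr : restrict x (m + 1) = restrict x m ++ [x m] := restrict_succ x m
    have hyr : restrict y (m + 1) = restrict x m ++ [y m] := by
      rw [restrict_succ]
      congr 1
      apply List.ext_get (by simp [restrict])
      intro i hi hi'
      have him : i < m := by simpa [restrict] using hi
      simp [restrict, List.get_ofFn, hmin i him]
    have h1 : InTree Q (restrict x m ++ [x m]) := hxr ▸ inTree_restrict hxQ (m + 1)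
    have h2 : InTree Q (restrict x m ++ [y m]) := hyr ▸ inTree_restrict hyQ (m + 1)
    rcases Bool.eq_false_or_eq_true (x m) with hb | hb
    · have hy : y m = false := by
        cases hxm : y m
        · rfl
        · exact absurd (by rw [hb, hxm]) hm
      rw [hb] at h1; rw [hy] at h2
      exact ⟨h2, h1⟩
    · have hy : y m = true := by
        cases hxm : y m
        · exact absurd (by rw [hb, hxm]) hm
        · rfl
      rw [hb] at h1; rw [hy] at h2
      exact ⟨h1, h2⟩

lemma firstSplit_split {Q : Set (ℕ → Bool)} (hQ : Perfect Q) {t : List Bool}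
    (ht : InTree Q t) : SplitNode Q (firstSplit Q t) := by
  obtain ⟨l0, hpre, hsp⟩ := exists_splitNode hQ ht
  have hexlen : ∃ k, ∃ l, l.length = k ∧ t <+: l ∧ SplitNode Q l := ⟨_, l0, rfl, hpre, hsp⟩
  classical
  obtain ⟨l, hlen, hp, hs⟩ := Nat.find_spec hexlen
  have h : ∃ l, t <+: l ∧ SplitNode Q l ∧
      ∀ l', t <+: l' → SplitNode Q l' → l.length ≤ l'.length := by
    refine ⟨l, hp, hs, fun l' hp' hs' => ?_⟩
    rw [hlen]
    exact Nat.find_min' hexlen ⟨l', rfl, hp', hs'⟩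
  rw [firstSplit, dif_pos h]
  exact h.choose_spec.2.1

lemma inTree_canonNodeRev {Q : Set (ℕ → Bool)} (hQ : PerfectSet Q) (v : List Bool) :
    InTree Q (canonNodeRev Q v) := by
  induction v with
  | nil =>
    obtain ⟨x, hx⟩ := hQ.2
    exact ⟨x, hx, fun i => absurd i.isLt (by simp [canonNodeRev])⟩
  | cons i u ih =>
    have hsp := firstSplit_split hQ.1 ih
    rcases Bool.eq_false_or_eq_true i with hb | hb
    · rw [canonNodeRev, hb]; exact hsp.2
    · rw [canonNodeRev, hb]; exact hsp.1

lemma piece_nonempty {Q : Set (ℕ → Bool)} (hQ : PerfectSet Q) (u : List Bool) :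
    (piece Q u).Nonempty := by
  obtain ⟨x, hx, hagree⟩ := inTree_canonNodeRev hQ u.reverse
  exact ⟨x, hx, hagree⟩

lemma piece_eq (Q : Set (ℕ → Bool)) (u : List Bool) :
    piece Q u = Q ∩ cyl (canonNode Q u) := rfl

lemma piece_perfect {Q : Set (ℕ → Bool)} (hQ : Perfect Q) (u : List Bool) :
    Perfect (piece Q u) := by
  rw [piece_eq]
  constructor
  · exact hQ.closed.inter (isClosed_cyl _)
  · intro x hx
    rw [accPt_iff_nhds]
    intro U hU
    obtain ⟨y, ⟨hy1, hy2⟩, hy3⟩ := accPt_iff_nhds.mp (hQ.acc x hx.1)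
      (U ∩ cyl (canonNode Q u))
      (Filter.inter_mem hU ((isOpen_cyl _).mem_nhds hx.2))
    exact ⟨y, ⟨hy1.1, hy2, hy1.2⟩, hy3⟩

lemma piece_subset (Q : Set (ℕ → Bool)) (u : List Bool) : piece Q u ⊆ Q := fun _ h => h.1

lemma piece_piece_subset (Q : Set (ℕ → Bool)) (u : List Bool) :
    piece (piece Q u) u ⊆ piece Q u := fun _ h => h.1

end CantorAux

/-- If `(Q,Y)` rejects `(u,a)`, there is `X ∈ [depth_Y(a), Y]` such that `(Q,Y)`
does not accept `(u,b)` for any `b ∈ r_{|a|+1}([a,X])`. -/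
theorem stmt8 (σ : RamseyStructure) (hax : σ.AxiomsAll)
    (F : Set (List Bool × σ.AR)) (Q : Set (ℕ → Bool)) (hQ : PerfectSet Q)
    (Y : σ.S) (u : List Bool) (a : σ.AR) (haY : (σ.basicR a Y).Nonempty)
    (hrej : rejects σ F Q Y u a) :
    ∃ X ∈ σ.basicSn (σ.depth a Y).toNat Y,
      ∀ b : σ.AR, (∃ B ∈ σ.basicR a X, b = σ.r B (σ.lenR a + 1)) →
        ¬ accepts σ F Q Y u b := by

  obtain ⟨hA1, hA2, hA3, hlen, hA4, hA5, hA6⟩ := hax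
  obtain ⟨X, hX, hcase⟩ := hA6 a {b | accepts σ F Q Y u b} Y haY
  refine ⟨X, hX, ?_⟩
  have hXle : σ.le X Y := hX.1
  rcases hcase with hpos | hneg
  · exfalso
    have hdep : (0:ℤ) ≤ σ.depth a Y := by
      obtain ⟨A, hAY, n, hra⟩ := haY
      obtain ⟨m, hm⟩ := (hA4.2.2.1 A Y).mp hAY n
      rw [hra] at hm
      rw [RamseyStructure.depth, if_pos ⟨m, hm⟩]
      exact Int.natCast_nonneg _
    have hne : (σ.basicR a X).Nonempty := (hA5 a Y).1 hdep X hX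
    refine hrej (piece Q u) ⟨piece_perfect hQ.1 u, piece_nonempty hQ u⟩
      subset_rfl X hXle hne ?_
    intro x hx B hB
    have hxQ : x ∈ piece Q u := hx.1
    have hBb : B ∈ σ.basicR (σ.r B (σ.lenR a + 1)) Y := by
      refine ⟨?_, _, rfl⟩
      rw [hA4.2.2.1]
      intro n
      obtain ⟨m, hm⟩ := (hA4.2.2.1 B X).mp hB.1 n
      obtain ⟨m', hm'⟩ := (hA4.2.1 X Y).mp hXle m
      exact ⟨m', hA4.2.2.2.1 _ _ _ hm hm'⟩
    exact hpos B hB x hxQ B hBb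
  · rintro b ⟨B, hB, hb⟩ hacc
    exact hneg B hB (by rw [← hb]; exact hacc)
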